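/- For every n ≥ 1 and every sequence of eight pairwise coprime integers a₁,…,a₈, every (2n+1)×(2n+1) integer matrix can be written as Σ_{i=1}^{8} aᵢAᵢ² with Aᵢ ∈ M_{2n+1}(ℤ). Hence f(2n+1) ≤ 8. -/

import Mathlib

namespace Stmt16X
open Matrix Finset


open Matrix Finset

def Sf (n : ℕ) (u v : ℕ → ℕ → ℤ) (i j : ℕ) : ℤ :=
  if i ≤ j then ∑ t ∈ Finset.range (n - j), (u (i+t) (j+t) - v (i+1+t) (j+1+t))
  else (∑ t ∈ Finset.range (j+1), v (i-j+t) t) - ∑ t ∈ Finset.range j, u (i-j+t) t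

section SfLemmas

variable (n : ℕ) (u v : ℕ → ℕ → ℤ)
variable (hu : ∀ i j, n ≤ i ∨ n ≤ j → u i j = 0)
variable (hv : ∀ i j, n + 1 ≤ i ∨ n + 1 ≤ j → v i j = 0)

include hu hv in
lemma Sf_rec (p q : ℕ) :
    Sf n u v (p+1) (q+1) = Sf n u v p q + v (p+1) (q+1) - u p q := by
  unfold Sf
  rcases le_or_gt p q with hpq | hpq
  · rw [if_pos (by omega : p + 1 ≤ q + 1), if_pos hpq]
    rcases le_or_gt n q with hq | hq
    · rw [show n - q = 0 by omega, show n - (q+1) = 0 by omega]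
      simp [hu p q (Or.inr hq), hv (p+1) (q+1) (Or.inr (by omega))]
    · have h1 : n - q = (n - (q+1)) + 1 := by omega
      rw [h1, Finset.sum_range_succ']
      have hcong : ∀ t ∈ Finset.range (n - (q+1)),
          u (p+(t+1)) (q+(t+1)) - v (p+1+(t+1)) (q+1+(t+1))
          = u (p+1+t) (q+1+t) - v (p+1+1+t) (q+1+1+t) := by
        intro t _
        congr 2 <;> omega
      rw [Finset.sum_congr rfl hcong]
      simp only [Nat.add_zero]
      ring
  · rw [if_neg (by omega), if_neg (by omega)]
    simp only [Nat.succ_sub_succ]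
    rw [Finset.sum_range_succ (fun t => v (p-q+t) t) (q+1),
        Finset.sum_range_succ (fun t => u (p-q+t) t) q]
    rw [show p-q+(q+1) = p+1 by omega, show p-q+q = p by omega]
    ring

lemma Sf_last_col (hn : 0 < n) (i : ℕ) (hi : i ≤ n - 1) :
    Sf n u v i (n-1) = u i (n-1) - v (i+1) n := by
  unfold Sf
  rw [if_pos hi, show n - (n-1) = 1 by omega]
  rw [Finset.sum_range_one]
  rw [show i + 0 = i by omega, show n-1+0 = n-1 by omega,
      show i+1+0 = i+1 by omega, show n-1+1+0 = n by omega]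

lemma Sf_col0 (i : ℕ) (hi : 0 < i) : Sf n u v i 0 = v i 0 := by
  unfold Sf
  rw [if_neg (by omega)]
  simp

lemma Sf_top_right (i : ℕ) (hi : i ≤ n) : Sf n u v i n = 0 := by
  unfold Sf
  rw [if_pos hi]
  simp

lemma Sf_00 (htr : ∑ t ∈ Finset.range n, u t t = ∑ t ∈ Finset.range (n+1), v t t) :
    Sf n u v 0 0 = v 0 0 := by
  unfold Sf
  rw [if_pos (le_refl 0), Nat.sub_zero]
  rw [Finset.sum_sub_distrib]
  have h2 : ∑ t ∈ Finset.range n, v (0+1+t) (0+1+t) = ∑ t ∈ Finset.range (n+1), v t t - v 0 0 := by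
    rw [Finset.sum_range_succ' (fun t => v t t) n]
    have hcong : ∀ t ∈ Finset.range n, v (0+1+t) (0+1+t) = v (t+1) (t+1) := by
      intro t _; rw [show 0+1+t = t+1 from by omega]
    rw [Finset.sum_congr rfl hcong]
    ring
  rw [h2]
  simp only [Nat.zero_add, zero_add]
  rw [htr]
  ring

end SfLemmas



open Matrix Finset

variable {n : ℕ}

/-- `P3 = [I | 0]`, an `n × (n+1)` matrix. -/
def P3 (n : ℕ) : Matrix (Fin n) (Fin (n+1)) ℤ :=
  Matrix.of fun i j => if (j:ℕ) = (i:ℕ) then 1 else 0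

/-- `P4 = [0 | I]`, an `n × (n+1)` matrix. -/
def P4 (n : ℕ) : Matrix (Fin n) (Fin (n+1)) ℤ :=
  Matrix.of fun i j => if (j:ℕ) = (i:ℕ) + 1 then 1 else 0

lemma mul_P3_apply (R : Matrix (Fin (n+1)) (Fin n) ℤ) (i j : Fin (n+1)) :
    (R * P3 n) i j = if h : (j:ℕ) < n then R i ⟨j, h⟩ else 0 := by
  rw [Matrix.mul_apply]
  split
  · next h =>
    rw [Finset.sum_eq_single (⟨(j:ℕ), h⟩ : Fin n)]
    · simp [P3]
    · intro k _ hk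
      have : (j:ℕ) ≠ (k:ℕ) := by
        intro he; exact hk (by exact Fin.ext he.symm)
      simp [P3, this]
    · intro hmem; exact absurd (Finset.mem_univ _) hmem
  · next h =>
    apply Finset.sum_eq_zero
    intro k _
    have : (j:ℕ) ≠ (k:ℕ) := by have := k.isLt; omega
    simp [P3, this]

lemma mul_P4_apply (R : Matrix (Fin (n+1)) (Fin n) ℤ) (i j : Fin (n+1)) :
    (R * P4 n) i j = if h : 0 < (j:ℕ) then R i ⟨(j:ℕ) - 1, by have := j.isLt; omega⟩ else 0 := by
  rw [Matrix.mul_apply]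
  split
  · next h =>
    rw [Finset.sum_eq_single (⟨(j:ℕ) - 1, by have := j.isLt; omega⟩ : Fin n)]
    · simp only [P4, Matrix.of_apply]
      rw [if_pos (by show (j:ℕ) = (j:ℕ) - 1 + 1; omega)]
      ring
    · intro k _ hk
      have : (j:ℕ) ≠ (k:ℕ) + 1 := by
        intro he
        apply hk
        apply Fin.ext
        simp
        omega
      simp [P4, this]
    · intro hmem; exact absurd (Finset.mem_univ _) hmem
  · next h =>
    apply Finset.sum_eq_zero
    intro k _
    have : (j:ℕ) ≠ (k:ℕ) + 1 := by omega
    simp [P4, this]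

lemma P3_mul_apply (R : Matrix (Fin (n+1)) (Fin n) ℤ) (i : Fin n) (j : Fin n) :
    (P3 n * R) i j = R ⟨(i:ℕ), by have := i.isLt; omega⟩ j := by
  rw [Matrix.mul_apply]
  rw [Finset.sum_eq_single (⟨(i:ℕ), by have := i.isLt; omega⟩ : Fin (n+1))]
  · simp [P3]
  · intro k _ hk
    have : (k:ℕ) ≠ (i:ℕ) := by
      intro he; exact hk (by exact Fin.ext he)
    simp [P3, this]
  · intro hmem; exact absurd (Finset.mem_univ _) hmem

lemma P4_mul_apply (R : Matrix (Fin (n+1)) (Fin n) ℤ) (i : Fin n) (j : Fin n) :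
    (P4 n * R) i j = R ⟨(i:ℕ) + 1, by have := i.isLt; omega⟩ j := by
  rw [Matrix.mul_apply]
  rw [Finset.sum_eq_single (⟨(i:ℕ) + 1, by have := i.isLt; omega⟩ : Fin (n+1))]
  · simp [P4]
  · intro k _ hk
    have : (k:ℕ) ≠ (i:ℕ) + 1 := by
      intro he; exact hk (by exact Fin.ext he)
    simp [P4, this]
  · intro hmem; exact absurd (Finset.mem_univ _) hmem



open Matrix

/-- A matrix whose square has trace exactly `z`. -/
def gad (n : ℕ) (hn : 0 < n) (z : ℤ) : Matrix (Fin (n+1)) (Fin (n+1)) ℤ :=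
  Matrix.single ⟨0, by omega⟩ ⟨0, by omega⟩ (z % 2)
  + Matrix.single ⟨0, by omega⟩ ⟨1, by omega⟩ 1
  + Matrix.single ⟨1, by omega⟩ ⟨0, by omega⟩ (z / 2)

lemma gad_trace_sq (n : ℕ) (hn : 0 < n) (z : ℤ) :
    ((gad n hn z) * (gad n hn z)).trace = z := by
  have h01 : (⟨0, by omega⟩ : Fin (n+1)) ≠ ⟨1, by omega⟩ := by
    simp [Fin.ext_iff]
  have h10 : (⟨1, by omega⟩ : Fin (n+1)) ≠ ⟨0, by omega⟩ := h01.symm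
  unfold gad
  rw [add_mul, add_mul, mul_add, mul_add, mul_add, mul_add, mul_add, mul_add]
  rw [Matrix.single_mul_single_same, Matrix.single_mul_single_same,
      Matrix.single_mul_single_of_ne (h := h10),
      Matrix.single_mul_single_of_ne (h := h01),
      Matrix.single_mul_single_of_ne (h := h01),
      Matrix.single_mul_single_same,
      Matrix.single_mul_single_same, Matrix.single_mul_single_same,
      Matrix.single_mul_single_of_ne (h := h10)]
  simp only [Matrix.trace_add, Matrix.trace_zero, Matrix.trace_single_eq_same,
    Matrix.trace_single_eq_of_ne _ _ _ h01, Matrix.trace_single_eq_of_ne _ _ _ h10,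
    add_zero, zero_add]
  have h2 := Int.emod_add_mul_ediv z 2
  rcases Int.emod_two_eq z with h | h <;> rw [h] <;> ring_nf <;> omega


theorem lemB (n : ℕ) (hn : 0 < n)
    (U : Matrix (Fin n) (Fin n) ℤ) (V : Matrix (Fin (n+1)) (Fin (n+1)) ℤ)
    (htr : U.trace = V.trace) :
    ∃ (Q₃ Q₄ : Matrix (Fin (n+1)) (Fin n) ℤ),
      P3 n * Q₃ + P4 n * Q₄ = U ∧ Q₃ * P3 n + Q₄ * P4 n = V := by
  set u : ℕ → ℕ → ℤ := fun i j => if h : i < n ∧ j < n then U ⟨i, h.1⟩ ⟨j, h.2⟩ else 0 with hu_def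
  set v : ℕ → ℕ → ℤ := fun i j =>
    if h : i < n+1 ∧ j < n+1 then V ⟨i, h.1⟩ ⟨j, h.2⟩ else 0 with hv_def
  have hu : ∀ i j, n ≤ i ∨ n ≤ j → u i j = 0 := by
    intro i j h; simp only [u]; rw [dif_neg]; omega
  have hv : ∀ i j, n+1 ≤ i ∨ n+1 ≤ j → v i j = 0 := by
    intro i j h; simp only [v]; rw [dif_neg]; omega
  have huin : ∀ (i j : Fin n), u (i:ℕ) (j:ℕ) = U i j := by
    intro i j; simp only [u]; rw [dif_pos ⟨i.isLt, j.isLt⟩]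
  have hvin : ∀ (i j : Fin (n+1)), v (i:ℕ) (j:ℕ) = V i j := by
    intro i j; simp only [v]; rw [dif_pos ⟨i.isLt, j.isLt⟩]
  have htr' : ∑ t ∈ Finset.range n, u t t = ∑ t ∈ Finset.range (n+1), v t t := by
    have h1 : U.trace = ∑ t ∈ Finset.range n, u t t := by
      rw [Matrix.trace, ← Fin.sum_univ_eq_sum_range (fun t => u t t) n]
      exact Finset.sum_congr rfl fun i _ => (huin i i).symm
    have h2 : V.trace = ∑ t ∈ Finset.range (n+1), v t t := by
      rw [Matrix.trace, ← Fin.sum_univ_eq_sum_range (fun t => v t t) (n+1)]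
      exact Finset.sum_congr rfl fun i _ => (hvin i i).symm
    rw [← h1, ← h2, htr]
  set S : ℕ → ℕ → ℤ := Sf n u v with hS_def
  set q3 : ℕ → ℕ → ℤ := fun i j =>
    if i < n then S i j
    else v n j - (if 0 < j then (u (n-1) (j-1) - S (n-1) (j-1)) else 0) with hq3_def
  set q4 : ℕ → ℕ → ℤ := fun i j =>
    if i = 0 then v 0 (j+1) - S 0 (j+1)
    else u (i-1) j - S (i-1) j with hq4_def
  refine ⟨Matrix.of fun i j => q3 (i:ℕ) (j:ℕ), Matrix.of fun i j => q4 (i:ℕ) (j:ℕ), ?_, ?_⟩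
  · ext i j
    rw [Matrix.add_apply, P3_mul_apply, P4_mul_apply]
    show q3 (i:ℕ) (j:ℕ) + q4 ((i:ℕ)+1) (j:ℕ) = U i j
    rw [← huin i j]
    simp only [q3, q4]
    rw [if_pos i.isLt, if_neg (by omega : ¬ (i:ℕ)+1 = 0), Nat.add_sub_cancel]
    ring
  · ext i j
    rw [Matrix.add_apply, mul_P3_apply, mul_P4_apply]
    rw [← hvin i j]
    have hjlt : (j:ℕ) < n + 1 := j.isLt
    have hilt : (i:ℕ) < n + 1 := i.isLt
    by_cases hjn : (j:ℕ) < n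
    · rw [dif_pos hjn]
      by_cases hj0 : 0 < (j:ℕ)
      · rw [dif_pos hj0]
        show q3 (i:ℕ) (j:ℕ) + q4 (i:ℕ) ((j:ℕ)-1) = v (i:ℕ) (j:ℕ)
        by_cases hin : (i:ℕ) < n
        · rw [hq3_def]
          simp only [if_pos hin]
          by_cases hi0 : (i:ℕ) = 0
          · rw [hq4_def]
            simp only [hi0, if_pos rfl]
            rw [show (j:ℕ)-1+1 = (j:ℕ) by omega]
            simp only [if_true]
            ring
          · rw [hq4_def]
            simp only [if_neg hi0]
            have hrec := Sf_rec n u v hu hv ((i:ℕ)-1) ((j:ℕ)-1)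
            rw [show (i:ℕ)-1+1 = (i:ℕ) by omega, show (j:ℕ)-1+1 = (j:ℕ) by omega] at hrec
            rw [hS_def]
            linarith [hrec]
        · have hieq : (i:ℕ) = n := by omega
          rw [hq3_def, hq4_def]
          simp only [if_neg hin, if_pos hj0, if_neg (by omega : ¬ (i:ℕ) = 0), hieq,
            if_neg (lt_irrefl n), if_neg (show ¬ n = 0 from by omega)]
          ring
      · have hjeq : (j:ℕ) = 0 := by omega
        rw [dif_neg hj0]
        show q3 (i:ℕ) (j:ℕ) + 0 = v (i:ℕ) (j:ℕ)
        rw [hq3_def]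
        by_cases hin : (i:ℕ) < n
        · simp only [if_pos hin, hjeq]
          by_cases hi0 : (i:ℕ) = 0
          · rw [hi0, hS_def, Sf_00 n u v htr']; ring
          · rw [hS_def, Sf_col0 n u v (i:ℕ) (by omega)]; ring
        · have hieq : (i:ℕ) = n := by omega
          simp only [if_neg hin, hjeq, if_neg (lt_irrefl 0), hieq, if_neg (lt_irrefl n)]
          ring
    · have hjeq : (j:ℕ) = n := by omega
      rw [dif_neg hjn, dif_pos (by omega : 0 < (j:ℕ))]
      show 0 + q4 (i:ℕ) ((j:ℕ)-1) = v (i:ℕ) (j:ℕ)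
      rw [hq4_def]
      by_cases hi0 : (i:ℕ) = 0
      · simp only [hi0, if_pos rfl]
        rw [show (j:ℕ)-1+1 = (j:ℕ) by omega, hjeq, hS_def, Sf_top_right n u v 0 (by omega)]
        simp only [if_true]
        ring
      · simp only [if_neg hi0]
        have hlast := Sf_last_col n u v hn ((i:ℕ)-1) (by omega)
        rw [show (i:ℕ)-1+1 = (i:ℕ) by omega] at hlast
        rw [hjeq, hS_def]
        linarith [hlast]


theorem key (n : ℕ) (hn : 0 < n) (a : Fin 8 → ℤ)
    (h01 : IsCoprime (a 0) (a 1)) (h23 : IsCoprime (a 2) (a 3))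
    (h45 : IsCoprime (a 4) (a 5)) (h67 : IsCoprime (a 6) (a 7))
    (M : Matrix (Fin n ⊕ Fin (n+1)) (Fin n ⊕ Fin (n+1)) ℤ) :
    ∃ A : Fin 8 → Matrix (Fin n ⊕ Fin (n+1)) (Fin n ⊕ Fin (n+1)) ℤ,
      M = ∑ i, a i • A i ^ 2 := by
  obtain ⟨u0, v0, hb0⟩ := h01
  obtain ⟨u2, v2, hb2⟩ := h23
  obtain ⟨u4, v4, hb4⟩ := h45
  obtain ⟨u6, v6, hb6⟩ := h67
  set X := M.toBlocks₁₁ with hX_def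
  set Bst := M.toBlocks₁₂ with hBst_def
  set Cst := M.toBlocks₂₁ with hCst_def
  set Y := M.toBlocks₂₂ with hY_def
  set Δ : ℤ := (Y.trace - (a 2 + a 3) * (n+1)) - (X.trace - (a 0 + a 1) * n) with hΔ_def
  set W := gad n hn (u4 * Δ) with hW_def
  set W' := gad n hn (v4 * Δ) with hW'_def
  set U0 : Matrix (Fin n) (Fin n) ℤ := X - (a 0 + a 1) • 1 with hU0_def
  set V1 : Matrix (Fin (n+1)) (Fin (n+1)) ℤ :=
    Y - (a 2 + a 3) • 1 - a 4 • (W * W) - a 5 • (W' * W') with hV1_def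
  clear_value X Bst Cst Y Δ W W' U0 V1
  have htr : U0.trace = V1.trace := by
    have hWt : (W * W).trace = u4 * Δ := by rw [hW_def]; exact gad_trace_sq n hn (u4 * Δ)
    have hWt' : (W' * W').trace = v4 * Δ := by rw [hW'_def]; exact gad_trace_sq n hn (v4 * Δ)
    rw [hU0_def, hV1_def]
    simp only [Matrix.trace_sub, Matrix.trace_smul, Matrix.trace_one, hWt, hWt',
      smul_eq_mul, Fintype.card_fin]
    push_cast
    linear_combination Δ * hb4 + hΔ_def
  obtain ⟨Q₃, Q₄, hU, hV⟩ := lemB n hn U0 V1 htr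
  set Bh := Bst - P3 n * (a 4 • W + a 5 • W') with hBh_def
  set Ch := Cst - ((a 4 * u4) • (W * Q₃) + (a 5 * v4) • (W' * Q₃)) with hCh_def
  clear_value Bh Ch
  set A0 := fromBlocks (1 : Matrix (Fin n) (Fin n) ℤ) (u0 • Bh) (0 : Matrix (Fin (n+1)) (Fin n) ℤ) (0 : Matrix (Fin (n+1)) (Fin (n+1)) ℤ) with hA0
  set A1 := fromBlocks (1 : Matrix (Fin n) (Fin n) ℤ) (v0 • Bh) (0 : Matrix (Fin (n+1)) (Fin n) ℤ) (0 : Matrix (Fin (n+1)) (Fin (n+1)) ℤ) with hA1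
  set A2 := fromBlocks (0 : Matrix (Fin n) (Fin n) ℤ) (0 : Matrix (Fin n) (Fin (n+1)) ℤ) (u2 • Ch) (1 : Matrix (Fin (n+1)) (Fin (n+1)) ℤ) with hA2
  set A3 := fromBlocks (0 : Matrix (Fin n) (Fin n) ℤ) (0 : Matrix (Fin n) (Fin (n+1)) ℤ) (v2 • Ch) (1 : Matrix (Fin (n+1)) (Fin (n+1)) ℤ) with hA3
  set A4 := fromBlocks (0 : Matrix (Fin n) (Fin n) ℤ) (P3 n) (u4 • Q₃) W with hA4
  set A5 := fromBlocks (0 : Matrix (Fin n) (Fin n) ℤ) (P3 n) (v4 • Q₃) W' with hA5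
  set A6 := fromBlocks (0 : Matrix (Fin n) (Fin n) ℤ) (P4 n) (u6 • Q₄) (0 : Matrix (Fin (n+1)) (Fin (n+1)) ℤ) with hA6
  set A7 := fromBlocks (0 : Matrix (Fin n) (Fin n) ℤ) (P4 n) (v6 • Q₄) (0 : Matrix (Fin (n+1)) (Fin (n+1)) ℤ) with hA7
  refine ⟨![A0, A1, A2, A3, A4, A5, A6, A7], ?_⟩
  rw [Fin.sum_univ_eight]
  show M = a 0 • A0 ^ 2 + a 1 • A1 ^ 2 + a 2 • A2 ^ 2 + a 3 • A3 ^ 2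
        + a 4 • A4 ^ 2 + a 5 • A5 ^ 2 + a 6 • A6 ^ 2 + a 7 • A7 ^ 2
  have sq0 : A0 ^ 2 = A0 := by
    rw [hA0, pow_two, fromBlocks_multiply]
    simp
  have sq1 : A1 ^ 2 = A1 := by
    rw [hA1, pow_two, fromBlocks_multiply]
    simp
  have sq2 : A2 ^ 2 = A2 := by
    rw [hA2, pow_two, fromBlocks_multiply]
    simp
  have sq3 : A3 ^ 2 = A3 := by
    rw [hA3, pow_two, fromBlocks_multiply]
    simp
  have sqgen : ∀ (c : ℤ) (P : Matrix (Fin n) (Fin (n+1)) ℤ) (Q : Matrix (Fin (n+1)) (Fin n) ℤ)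
      (Wm : Matrix (Fin (n+1)) (Fin (n+1)) ℤ),
      (fromBlocks (0 : Matrix (Fin n) (Fin n) ℤ) P (c • Q) Wm) ^ 2
      = fromBlocks (c • (P * Q)) (P * Wm) (c • (Wm * Q)) (c • (Q * P) + Wm * Wm) := by
    intro c P Q Wm
    rw [pow_two, fromBlocks_multiply]
    simp [Matrix.mul_smul, Matrix.smul_mul]
  rw [sq0, sq1, sq2, sq3, hA4, hA5, hA6, hA7, sqgen u4 (P3 n) Q₃ W, sqgen v4 (P3 n) Q₃ W',
      sqgen u6 (P4 n) Q₄ 0, sqgen v6 (P4 n) Q₄ 0]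
  rw [hA0, hA1, hA2, hA3]
  simp only [Matrix.fromBlocks_smul, Matrix.fromBlocks_add, Matrix.mul_zero, Matrix.zero_mul,
    add_zero, smul_zero]
  rw [← fromBlocks_toBlocks M, ← hX_def, ← hBst_def, ← hCst_def, ← hY_def]
  have hXeq : X = a 0 • (1 : Matrix (Fin n) (Fin n) ℤ) + a 1 • 1 + (P3 n * Q₃ + P4 n * Q₄) := by
    rw [hU]
    rw [hU0_def]
    match_scalars <;> ring
  have hYeq : Y = a 2 • (1 : Matrix (Fin (n+1)) (Fin (n+1)) ℤ) + a 3 • 1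
      + (Q₃ * P3 n + Q₄ * P4 n) + a 4 • (W * W) + a 5 • (W' * W') := by
    rw [hV, hV1_def]
    match_scalars <;> ring
  have hBeq : Bst = Bh + (a 4 • (P3 n * W) + a 5 • (P3 n * W')) := by
    rw [hBh_def]
    rw [Matrix.mul_add, Matrix.mul_smul, Matrix.mul_smul]
    match_scalars <;> ring
  have hCeq : Cst = Ch + ((a 4 * u4) • (W * Q₃) + (a 5 * v4) • (W' * Q₃)) := by
    rw [hCh_def]
    match_scalars <;> ring
  rw [hXeq, hYeq, hBeq, hCeq, Matrix.fromBlocks_inj]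
  refine ⟨?_, ?_, ?_, ?_⟩
  · match_scalars <;> first | ring1 | (linear_combination hb4) | (linear_combination -hb4) | (linear_combination hb6) | (linear_combination -hb6)
  · match_scalars <;> first | ring1 | (linear_combination hb0) | (linear_combination -hb0)
  · match_scalars <;> first | ring1 | (linear_combination hb2) | (linear_combination -hb2)
  · match_scalars <;> first | ring1 | (linear_combination hb4) | (linear_combination -hb4) | (linear_combination hb6) | (linear_combination -hb6)


end Stmt16X

theorem stmt16 (n : ℕ) (hn : 1 ≤ n) (a : Fin 8 → ℤ)
    (hco : ∀ i j, i ≠ j → IsCoprime (a i) (a j)) :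
    ∀ M : Matrix (Fin (2 * n + 1)) (Fin (2 * n + 1)) ℤ,
      ∃ A : Fin 8 → Matrix (Fin (2 * n + 1)) (Fin (2 * n + 1)) ℤ, M = ∑ i, a i • (A i) ^ 2 := by
  intro M
  have e : (Fin n ⊕ Fin (n+1)) ≃ Fin (2 * n + 1) :=
    finSumFinEquiv.trans (finCongr (by omega))
  obtain ⟨A, hA⟩ := Stmt16X.key n hn a
    (hco 0 1 (by decide)) (hco 2 3 (by decide)) (hco 4 5 (by decide)) (hco 6 7 (by decide))
    (M.submatrix e e)
  refine ⟨fun i => (A i).submatrix e.symm e.symm, ?_⟩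
  have hM : M = (M.submatrix e e).submatrix e.symm e.symm := by
    rw [Matrix.submatrix_submatrix]
    simp
  rw [hM, hA]
  ext i j
  rw [Matrix.submatrix_apply, Matrix.sum_apply, Matrix.sum_apply]
  refine Finset.sum_congr rfl fun k _ => ?_
  rw [Matrix.smul_apply, Matrix.smul_apply]
  congr 1
  have hsq : ((A k).submatrix e.symm e.symm) ^ 2 = ((A k) ^ 2).submatrix e.symm e.symm := by
    rw [pow_two, pow_two, Matrix.submatrix_mul_equiv]
  rw [hsq, Matrix.submatrix_apply]
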